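/- The topological entropy of X(𝔸) exists and dominates the block lower bounds: the limit H₀ := lim_{k→∞} (log₂ |X_{Λ_k}|)/k² exists, and for every n, m ≥ 1 it satisfies H₀ ≥ (log₂ |M_{Λ_{n,m}}|)/((n+1)(m+1)). -/

import Mathlib

/-- Adjacency in the triangular lattice, modeled on `ℤ × ℤ`. -/
def TriAdj (u v : ℤ × ℤ) : Prop :=
  (u.1 - v.1, u.2 - v.2) ∈
    ({(1, 0), (-1, 0), (0, 1), (0, -1), (1, -1), (-1, 1)} : Finset (ℤ × ℤ))

/-- A set of sites is independent if no two of its elements are adjacent. -/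
def IsIndependent (S : Set (ℤ × ℤ)) : Prop :=
  ∀ u ∈ S, ∀ v ∈ S, ¬ TriAdj u v

/-- Maximal independent set of the triangular lattice. -/
def IsMIS (S : Set (ℤ × ℤ)) : Prop :=
  IsIndependent S ∧ ∀ u ∉ S, ∃ v ∈ S, TriAdj u v

/-- The box `{a,…,b} × {c,…,d} ⊆ ℤ²`. -/
def Box (a b c d : ℤ) : Set (ℤ × ℤ) :=
  {p | a ≤ p.1 ∧ p.1 ≤ b ∧ c ≤ p.2 ∧ p.2 ≤ d}

/-- The rectangle `Λ_{n,m} = {1,…,n} × {1,…,m}`. -/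
def Rect (n m : ℤ) : Set (ℤ × ℤ) := Box 1 n 1 m

/-- `T` is a maximal configuration on the region `Λ`: `T ⊆ Λ`, `T` is
independent, and every site of `Λ \ T` has a neighbor in `T`. -/
def IsMaxConfig (Λ T : Set (ℤ × ℤ)) : Prop :=
  T ⊆ Λ ∧ IsIndependent T ∧ ∀ u ∈ Λ \ T, ∃ v ∈ T, TriAdj u v

/-- `T` is a compatible configuration on the region `Λ`: it is the restriction
to `Λ` of some maximal independent set of the whole lattice. -/
def IsCompatConfig (Λ T : Set (ℤ × ℤ)) : Prop :=
  ∃ S : Set (ℤ × ℤ), IsMIS S ∧ S ∩ Λ = T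

/-- The set of maximal configurations on the region `Λ`. -/
def MaxConfigs (Λ : Set (ℤ × ℤ)) : Set (Set (ℤ × ℤ)) := {T | IsMaxConfig Λ T}

/-- The set of compatible configurations on the region `Λ`. -/
def CompatConfigs (Λ : Set (ℤ × ℤ)) : Set (Set (ℤ × ℤ)) := {T | IsCompatConfig Λ T}

/- ### basics -/

lemma triAdj_iff {u v : ℤ × ℤ} : TriAdj u v ↔
    (u.1 - v.1 = 1 ∧ u.2 - v.2 = 0) ∨ (u.1 - v.1 = -1 ∧ u.2 - v.2 = 0) ∨
    (u.1 - v.1 = 0 ∧ u.2 - v.2 = 1) ∨ (u.1 - v.1 = 0 ∧ u.2 - v.2 = -1) ∨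
    (u.1 - v.1 = 1 ∧ u.2 - v.2 = -1) ∨ (u.1 - v.1 = -1 ∧ u.2 - v.2 = 1) := by
  simp [TriAdj, Prod.ext_iff]

lemma triAdj_symm {u v : ℤ × ℤ} (h : TriAdj u v) : TriAdj v u := by
  rw [triAdj_iff] at h ⊢; omega

lemma triAdj_irrefl (u : ℤ × ℤ) : ¬ TriAdj u u := by
  rw [triAdj_iff]; omega

lemma triAdj_bounds {u v : ℤ × ℤ} (h : TriAdj u v) :
    (u.1 - v.1 ≤ 1 ∧ v.1 - u.1 ≤ 1 ∧ u.2 - v.2 ≤ 1 ∧ v.2 - u.2 ≤ 1) := by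
  rw [triAdj_iff] at h; omega

/- ### translation -/

def trS (t : ℤ × ℤ) (S : Set (ℤ × ℤ)) : Set (ℤ × ℤ) := (fun p => p + t) '' S

lemma trS_inj (t : ℤ × ℤ) : Function.Injective (trS t) :=
  Set.image_injective.2 (add_left_injective t)

lemma mem_trS {t : ℤ × ℤ} {S : Set (ℤ × ℤ)} {p : ℤ × ℤ} :
    p ∈ trS t S ↔ p - t ∈ S := by
  constructor
  · rintro ⟨q, hq, rfl⟩; simpa using hq
  · intro h; exact ⟨p - t, h, by simp⟩

lemma trS_inter (t : ℤ × ℤ) (A B : Set (ℤ × ℤ)) :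
    trS t (A ∩ B) = trS t A ∩ trS t B := by
  ext p; simp [mem_trS]

lemma triAdj_add {u v t : ℤ × ℤ} : TriAdj (u + t) (v + t) ↔ TriAdj u v := by
  unfold TriAdj; simp

lemma isIndependent_trS {t : ℤ × ℤ} {S : Set (ℤ × ℤ)} (h : IsIndependent S) :
    IsIndependent (trS t S) := by
  rintro u ⟨u', hu', rfl⟩ v ⟨v', hv', rfl⟩
  rw [triAdj_add]; exact h u' hu' v' hv'

lemma isMIS_trS {t : ℤ × ℤ} {S : Set (ℤ × ℤ)} (h : IsMIS S) : IsMIS (trS t S) := by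
  refine ⟨isIndependent_trS h.1, fun u hu => ?_⟩
  obtain ⟨v, hv, hadj⟩ := h.2 (u - t) (by rwa [← mem_trS])
  exact ⟨v + t, ⟨v, hv, rfl⟩, by rw [show u = (u - t) + t by ring] ; rwa [triAdj_add]⟩

lemma isMaxConfig_trS {t : ℤ × ℤ} {Λ T : Set (ℤ × ℤ)} (h : IsMaxConfig Λ T) :
    IsMaxConfig (trS t Λ) (trS t T) := by
  obtain ⟨hsub, hind, hdom⟩ := h
  refine ⟨Set.image_mono hsub, isIndependent_trS hind, fun u hu => ?_⟩
  have hu' : u - t ∈ Λ \ T := by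
    constructor
    · rw [← mem_trS]; exact hu.1
    · intro hc; exact hu.2 (mem_trS.2 hc)
  obtain ⟨v, hv, hadj⟩ := hdom _ hu'
  exact ⟨v + t, ⟨v, hv, rfl⟩, by rw [show u = (u - t) + t by ring]; rwa [triAdj_add]⟩

/- ### Zorn -/

lemma exists_maximal_extension (G U : Set (ℤ × ℤ)) (hUG : U ⊆ G) (hU : IsIndependent U) :
    ∃ T, U ⊆ T ∧ T ⊆ G ∧ IsIndependent T ∧ ∀ u ∈ G \ T, ∃ v ∈ T, TriAdj u v := by
  set 𝒮 : Set (Set (ℤ × ℤ)) := {T | U ⊆ T ∧ T ⊆ G ∧ IsIndependent T} with h𝒮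
  have hchain : ∀ c ⊆ 𝒮, IsChain (fun x1 x2 => x1 ⊆ x2) c → c.Nonempty →
      ∃ ub ∈ 𝒮, ∀ s ∈ c, s ⊆ ub := by
    intro c hc hchain ⟨s₀, hs₀⟩
    refine ⟨⋃₀ c, ⟨(hc hs₀).1.trans (Set.subset_sUnion_of_mem hs₀), ?_, ?_⟩,
      fun s hs => Set.subset_sUnion_of_mem hs⟩
    · exact Set.sUnion_subset fun s hs => (hc hs).2.1
    · rintro u ⟨s, hs, hus⟩ v ⟨s', hs', hvs'⟩
      rcases hchain.total hs hs' with h | h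
      · exact (hc hs').2.2 u (h hus) v hvs'
      · exact (hc hs).2.2 u hus v (h hvs')
  obtain ⟨T, hUT, hTmem, hTmax⟩ := zorn_subset_nonempty 𝒮 hchain U ⟨Set.Subset.rfl, hUG, hU⟩
  refine ⟨T, hUT, hTmem.2.1, hTmem.2.2, fun u hu => ?_⟩
  by_contra hno
  push_neg at hno
  have hins : insert u T ∈ 𝒮 := by
    refine ⟨hTmem.1.trans (Set.subset_insert _ _), Set.insert_subset hu.1 hTmem.2.1, ?_⟩
    rintro a ha b hb
    rcases Set.mem_insert_iff.1 ha with rfl | ha' <;>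
      rcases Set.mem_insert_iff.1 hb with rfl | hb'
    · exact triAdj_irrefl _
    · exact fun h => hno b hb' h
    · exact fun h => hno a ha' (triAdj_symm h)
    · exact hTmem.2.2 a ha' b hb'
  have := hTmax hins (Set.subset_insert _ _)
  exact hu.2 (this (Set.mem_insert _ _))

lemma exists_isMIS_extension {U : Set (ℤ × ℤ)} (hU : IsIndependent U) :
    ∃ S, U ⊆ S ∧ IsMIS S := by
  obtain ⟨T, hUT, -, hind, hdom⟩ :=
    exists_maximal_extension Set.univ U (Set.subset_univ _) hU
  exact ⟨T, hUT, hind, fun u hu => hdom u ⟨Set.mem_univ _, hu⟩⟩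

lemma exists_isMIS : ∃ S, IsMIS S := by
  obtain ⟨S, -, hS⟩ := exists_isMIS_extension (U := ∅) (by rintro u ⟨⟩)
  exact ⟨S, hS⟩

lemma maxConfigs_nonempty (Λ : Set (ℤ × ℤ)) : (MaxConfigs Λ).Nonempty := by
  obtain ⟨T, -, hTG, hind, hdom⟩ :=
    exists_maximal_extension Λ ∅ (by rintro u ⟨⟩) (by rintro u ⟨⟩)
  exact ⟨T, hTG, hind, hdom⟩

lemma compatConfigs_nonempty (Λ : Set (ℤ × ℤ)) : (CompatConfigs Λ).Nonempty := by
  obtain ⟨S, hS⟩ := exists_isMIS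
  exact ⟨S ∩ Λ, S, hS, rfl⟩

/- ### finiteness -/

lemma box_finite (a b c d : ℤ) : (Box a b c d).Finite := by
  apply Set.Finite.subset ((Set.finite_Icc a b).prod (Set.finite_Icc c d))
  rintro ⟨x, y⟩ ⟨h1, h2, h3, h4⟩
  exact ⟨⟨h1, h2⟩, ⟨h3, h4⟩⟩

lemma compatConfigs_finite {Λ : Set (ℤ × ℤ)} (h : Λ.Finite) : (CompatConfigs Λ).Finite := by
  apply Set.Finite.subset h.finite_subsets
  rintro T ⟨S, -, rfl⟩
  exact Set.inter_subset_right

lemma maxConfigs_finite {Λ : Set (ℤ × ℤ)} (h : Λ.Finite) : (MaxConfigs Λ).Finite := by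
  apply Set.Finite.subset h.finite_subsets
  rintro T hT
  exact hT.1

lemma one_le_ncard_compat {Λ : Set (ℤ × ℤ)} (h : Λ.Finite) :
    1 ≤ (CompatConfigs Λ).ncard :=
  (Set.ncard_pos (compatConfigs_finite h)).2 (compatConfigs_nonempty Λ)

lemma one_le_ncard_max {Λ : Set (ℤ × ℤ)} (h : Λ.Finite) :
    1 ≤ (MaxConfigs Λ).ncard :=
  (Set.ncard_pos (maxConfigs_finite h)).2 (maxConfigs_nonempty Λ)

/- ### counting -/

lemma compatConfigs_trS (t : ℤ × ℤ) (Λ : Set (ℤ × ℤ)) :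
    CompatConfigs (trS t Λ) = trS t '' CompatConfigs Λ := by
  ext T
  constructor
  · rintro ⟨S, hS, rfl⟩
    refine ⟨trS (-t) S ∩ Λ, ⟨trS (-t) S, isMIS_trS hS, rfl⟩, ?_⟩
    rw [trS_inter]
    congr 1
    ext p
    simp only [mem_trS]
    constructor
    · intro h; rw [show p - t - -t = p by ring] at h; exact h
    · intro h; rw [show p - t - -t = p by ring]; exact h
  · rintro ⟨T', ⟨S, hS, rfl⟩, rfl⟩
    exact ⟨trS t S, isMIS_trS hS, (trS_inter t S Λ).symm⟩

lemma ncard_compat_trS (t : ℤ × ℤ) (Λ : Set (ℤ × ℤ)) :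
    (CompatConfigs (trS t Λ)).ncard = (CompatConfigs Λ).ncard := by
  rw [compatConfigs_trS, Set.ncard_image_of_injective _ (trS_inj t)]

lemma ncard_compat_mono {Λ Λ' : Set (ℤ × ℤ)} (hsub : Λ ⊆ Λ') (hfin : Λ'.Finite) :
    (CompatConfigs Λ).ncard ≤ (CompatConfigs Λ').ncard := by
  have himg : CompatConfigs Λ ⊆ (fun T => T ∩ Λ) '' CompatConfigs Λ' := by
    rintro T ⟨S, hS, rfl⟩
    refine ⟨S ∩ Λ', ⟨S, hS, rfl⟩, ?_⟩
    show S ∩ Λ' ∩ Λ = S ∩ Λ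
    ext p; simp only [Set.mem_inter_iff]
    exact ⟨fun h => ⟨h.1.1, h.2⟩, fun h => ⟨⟨h.1, hsub h.2⟩, h.2⟩⟩
  calc (CompatConfigs Λ).ncard ≤ ((fun T => T ∩ Λ) '' CompatConfigs Λ').ncard :=
        Set.ncard_le_ncard himg ((compatConfigs_finite hfin).image _)
    _ ≤ (CompatConfigs Λ').ncard := Set.ncard_image_le (compatConfigs_finite hfin)

lemma ncard_compat_union_le {Λ₁ Λ₂ : Set (ℤ × ℤ)} (h₁ : Λ₁.Finite) (h₂ : Λ₂.Finite) :
    (CompatConfigs (Λ₁ ∪ Λ₂)).ncard ≤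
      (CompatConfigs Λ₁).ncard * (CompatConfigs Λ₂).ncard := by
  set f : Set (ℤ × ℤ) → Set (ℤ × ℤ) × Set (ℤ × ℤ) := fun T => (T ∩ Λ₁, T ∩ Λ₂) with hf
  have key : ∀ T ∈ CompatConfigs (Λ₁ ∪ Λ₂), T = (f T).1 ∪ (f T).2 := by
    rintro T ⟨S, hS, rfl⟩
    show S ∩ (Λ₁ ∪ Λ₂) = S ∩ (Λ₁ ∪ Λ₂) ∩ Λ₁ ∪ S ∩ (Λ₁ ∪ Λ₂) ∩ Λ₂
    ext p; simp only [Set.mem_inter_iff, Set.mem_union]; tauto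
  have hinj : Set.InjOn f (CompatConfigs (Λ₁ ∪ Λ₂)) := by
    intro T hT T' hT' heq
    rw [key T hT, key T' hT', heq]
  have hmaps : f '' CompatConfigs (Λ₁ ∪ Λ₂) ⊆
      (CompatConfigs Λ₁) ×ˢ (CompatConfigs Λ₂) := by
    rintro - ⟨T, ⟨S, hS, rfl⟩, rfl⟩
    constructor
    · refine ⟨S, hS, ?_⟩
      show S ∩ Λ₁ = S ∩ (Λ₁ ∪ Λ₂) ∩ Λ₁
      ext p; simp only [Set.mem_inter_iff, Set.mem_union]; tauto
    · refine ⟨S, hS, ?_⟩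
      show S ∩ Λ₂ = S ∩ (Λ₁ ∪ Λ₂) ∩ Λ₂
      ext p; simp only [Set.mem_inter_iff, Set.mem_union]; tauto
  have hfinP : ((CompatConfigs Λ₁) ×ˢ (CompatConfigs Λ₂)).Finite :=
    (compatConfigs_finite h₁).prod (compatConfigs_finite h₂)
  calc (CompatConfigs (Λ₁ ∪ Λ₂)).ncard
      = (f '' CompatConfigs (Λ₁ ∪ Λ₂)).ncard := (Set.ncard_image_of_injOn hinj).symm
    _ ≤ ((CompatConfigs Λ₁) ×ˢ (CompatConfigs Λ₂)).ncard := Set.ncard_le_ncard hmaps hfinP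
    _ = (CompatConfigs Λ₁).ncard * (CompatConfigs Λ₂).ncard := by
        rw [← Nat.card_coe_set_eq, ← Nat.card_coe_set_eq, ← Nat.card_coe_set_eq]
        have := (compatConfigs_finite h₁).to_subtype
        have := (compatConfigs_finite h₂).to_subtype
        rw [← Nat.card_prod]
        exact Nat.card_congr (Equiv.Set.prod _ _)

/-- number of compatible configurations on the `n × m` rectangle. -/
noncomputable def cc (n m : ℤ) : ℕ := (CompatConfigs (Rect n m)).ncard

lemma box_eq_trS (a b c d : ℤ) :
    Box a b c d = trS (a - 1, c - 1) (Rect (b - a + 1) (d - c + 1)) := by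
  ext ⟨x, y⟩
  simp only [mem_trS, Box, Rect, Set.mem_setOf_eq, Prod.fst_sub, Prod.snd_sub]
  constructor <;> intro h <;> [skip; skip] <;>
    omega

lemma ncard_compat_box (a b c d : ℤ) :
    (CompatConfigs (Box a b c d)).ncard = cc (b - a + 1) (d - c + 1) := by
  rw [box_eq_trS, ncard_compat_trS]; rfl

lemma cc_pos (n m : ℤ) : 1 ≤ cc n m := one_le_ncard_compat (box_finite _ _ _ _)

lemma cc_mono {n m n' m' : ℤ} (hn : n ≤ n') (hm : m ≤ m') : cc n m ≤ cc n' m' := by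
  apply ncard_compat_mono _ (box_finite _ _ _ _)
  rintro ⟨x, y⟩ ⟨h1, h2, h3, h4⟩
  exact ⟨h1, h2.trans hn, h3, h4.trans hm⟩

lemma cc_split_h {n₁ n₂ m : ℤ} (h₁ : 0 ≤ n₁) (h₂ : 0 ≤ n₂) :
    cc (n₁ + n₂) m ≤ cc n₁ m * cc n₂ m := by
  have hsplit : Rect (n₁ + n₂) m = Box 1 n₁ 1 m ∪ Box (n₁ + 1) (n₁ + n₂) 1 m := by
    ext ⟨x, y⟩
    simp only [Rect, Box, Set.mem_setOf_eq, Set.mem_union]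
    omega
  calc cc (n₁ + n₂) m
      ≤ (CompatConfigs (Box 1 n₁ 1 m)).ncard * (CompatConfigs (Box (n₁+1) (n₁+n₂) 1 m)).ncard := by
        rw [cc, hsplit]; exact ncard_compat_union_le (box_finite _ _ _ _) (box_finite _ _ _ _)
    _ = cc n₁ m * cc n₂ m := by
        rw [ncard_compat_box, ncard_compat_box]
        norm_num

lemma cc_split_v {n m₁ m₂ : ℤ} (h₁ : 0 ≤ m₁) (h₂ : 0 ≤ m₂) :
    cc n (m₁ + m₂) ≤ cc n m₁ * cc n m₂ := by
  have hsplit : Rect n (m₁ + m₂) = Box 1 n 1 m₁ ∪ Box 1 n (m₁ + 1) (m₁ + m₂) := by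
    ext ⟨x, y⟩
    simp only [Rect, Box, Set.mem_setOf_eq, Set.mem_union]
    omega
  calc cc n (m₁ + m₂)
      ≤ (CompatConfigs (Box 1 n 1 m₁)).ncard * (CompatConfigs (Box 1 n (m₁+1) (m₁+m₂))).ncard := by
        rw [cc, hsplit]; exact ncard_compat_union_le (box_finite _ _ _ _) (box_finite _ _ _ _)
    _ = cc n m₁ * cc n m₂ := by
        rw [ncard_compat_box, ncard_compat_box]
        norm_num

lemma cc_mul_h (q : ℕ) {n m : ℤ} (hn : 0 ≤ n) :
    cc (q * n) m ≤ (cc n m) ^ q := by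
  induction q with
  | zero =>
      simp only [Nat.cast_zero, zero_mul, pow_zero]
      have : Rect 0 m = (∅ : Set (ℤ × ℤ)) := by
        ext ⟨x, y⟩
        constructor
        · rintro ⟨h1, h2, h3, h4⟩; omega
        · rintro ⟨⟩
      have h2 : CompatConfigs (Rect 0 m) = {(∅ : Set (ℤ × ℤ))} := by
        rw [this]
        ext T
        constructor
        · rintro ⟨S, -, rfl⟩; simp
        · rintro rfl
          obtain ⟨S, hS⟩ := exists_isMIS
          exact ⟨S, hS, Set.inter_empty S⟩
      rw [cc, h2, Set.ncard_singleton]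
  | succ q ih =>
      have : ((q + 1 : ℕ) : ℤ) * n = (q : ℕ) * n + n := by push_cast; ring
      rw [this]
      calc cc ((q : ℕ) * n + n) m ≤ cc ((q : ℕ) * n) m * cc n m :=
            cc_split_h (by positivity) hn
        _ ≤ (cc n m) ^ q * cc n m := Nat.mul_le_mul_right _ ih
        _ = (cc n m) ^ (q + 1) := by ring

lemma cc_mul_v (q : ℕ) {n m : ℤ} (hm : 0 ≤ m) :
    cc n (q * m) ≤ (cc n m) ^ q := by
  induction q with
  | zero =>
      simp only [Nat.cast_zero, zero_mul, pow_zero]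
      have : Rect n 0 = (∅ : Set (ℤ × ℤ)) := by
        ext ⟨x, y⟩
        constructor
        · rintro ⟨h1, h2, h3, h4⟩; omega
        · rintro ⟨⟩
      have h2 : CompatConfigs (Rect n 0) = {(∅ : Set (ℤ × ℤ))} := by
        rw [this]
        ext T
        constructor
        · rintro ⟨S, -, rfl⟩; simp
        · rintro rfl
          obtain ⟨S, hS⟩ := exists_isMIS
          exact ⟨S, hS, Set.inter_empty S⟩
      rw [cc, h2, Set.ncard_singleton]
  | succ q ih =>
      have : ((q + 1 : ℕ) : ℤ) * m = (q : ℕ) * m + m := by push_cast; ring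
      rw [this]
      calc cc n ((q : ℕ) * m + m) ≤ cc n ((q : ℕ) * m) * cc n m :=
            cc_split_v (by positivity) hm
        _ ≤ (cc n m) ^ q * cc n m := Nat.mul_le_mul_right _ ih
        _ = (cc n m) ^ (q + 1) := by ring

/-- key subadditivity: `cc (q*n) (q*n) ≤ (cc n n)^(q*q)`. -/
lemma cc_sq_le (q : ℕ) {n : ℤ} (hn : 0 ≤ n) :
    cc (q * n) (q * n) ≤ (cc n n) ^ (q * q) := by
  calc cc ((q : ℕ) * n) ((q : ℕ) * n) ≤ (cc n ((q : ℕ) * n)) ^ q := cc_mul_h q hn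
    _ ≤ ((cc n n) ^ q) ^ q := Nat.pow_le_pow_left (cc_mul_v q hn) q
    _ = (cc n n) ^ (q * q) := by rw [← pow_mul, Nat.mul_comm]

/- ### lower bound construction -/

lemma sep_helper {i i' c : ℤ} (h : i < i') (hc : 0 ≤ c) : i * c + c ≤ i' * c := by
  nlinarith

lemma tiles_sep {n m : ℤ} (hn : 1 ≤ n) (hm : 1 ≤ m) {i i' j j' : ℤ}
    (h : i ≠ i' ∨ j ≠ j') {u v : ℤ × ℤ}
    (hu : u ∈ trS (i * (n+1), j * (m+1)) (Rect n m))
    (hv : v ∈ trS (i' * (n+1), j' * (m+1)) (Rect n m)) :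
    ¬ TriAdj u v := by
  intro hadj
  have hb := triAdj_bounds hadj
  rw [mem_trS] at hu hv
  simp only [Rect, Box, Set.mem_setOf_eq, Prod.fst_sub, Prod.snd_sub] at hu hv
  obtain ⟨hu1, hu2, hu3, hu4⟩ := hu
  obtain ⟨hv1, hv2, hv3, hv4⟩ := hv
  rcases h with h | h
  · rcases h.lt_or_gt with hlt | hlt
    · have := sep_helper hlt (show (0:ℤ) ≤ n + 1 by omega); linarith
    · have := sep_helper hlt (show (0:ℤ) ≤ n + 1 by omega); linarith
  · rcases h.lt_or_gt with hlt | hlt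
    · have := sep_helper hlt (show (0:ℤ) ≤ m + 1 by omega); linarith
    · have := sep_helper hlt (show (0:ℤ) ≤ m + 1 by omega); linarith

section LowerBound

variable {n m : ℤ} {p q k : ℕ}

/-- offset of the `(i,j)` tile -/
def toff (n m : ℤ) (ij : Fin p × Fin q) : ℤ × ℤ :=
  ((ij.1 : ℤ) * (n + 1), (ij.2 : ℤ) * (m + 1))

lemma tile_sub_rect (hn : 1 ≤ n) (hm : 1 ≤ m)
    (hp : (p : ℤ) * (n + 1) ≤ k) (hq : (q : ℤ) * (m + 1) ≤ k) (ij : Fin p × Fin q) :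
    trS (toff n m ij) (Rect n m) ⊆ Rect k k := by
  intro u hu
  rw [mem_trS] at hu
  simp only [Rect, Box, Set.mem_setOf_eq, Prod.fst_sub, Prod.snd_sub, toff] at hu ⊢
  obtain ⟨h1, h2, h3, h4⟩ := hu
  have hi : ((ij.1 : ℤ) + 1) * (n + 1) ≤ (p : ℤ) * (n + 1) := by
    have : ((ij.1 : ℤ) + 1) ≤ (p : ℤ) := by exact_mod_cast ij.1.2
    exact mul_le_mul_of_nonneg_right this (by omega)
  have hj : ((ij.2 : ℤ) + 1) * (m + 1) ≤ (q : ℤ) * (m + 1) := by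
    have : ((ij.2 : ℤ) + 1) ≤ (q : ℤ) := by exact_mod_cast ij.2.2
    exact mul_le_mul_of_nonneg_right this (by omega)
  have e1 : ((ij.1 : ℤ) + 1) * (n + 1) = (ij.1 : ℤ) * (n + 1) + n + 1 := by ring
  have e2 : ((ij.2 : ℤ) + 1) * (m + 1) = (ij.2 : ℤ) * (m + 1) + m + 1 := by ring
  have hnn : (0:ℤ) ≤ (ij.1 : ℤ) * (n + 1) :=
    mul_nonneg (by positivity) (by omega)
  have hmm : (0:ℤ) ≤ (ij.2 : ℤ) * (m + 1) :=
    mul_nonneg (by positivity) (by omega)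
  constructor
  · linarith
  refine ⟨by linarith, by linarith, by linarith⟩

lemma exists_compat_of_tiles (hn : 1 ≤ n) (hm : 1 ≤ m)
    (hp : (p : ℤ) * (n + 1) ≤ k) (hq : (q : ℤ) * (m + 1) ≤ k)
    (f : Fin p × Fin q → Set (ℤ × ℤ)) (hf : ∀ ij, f ij ∈ MaxConfigs (Rect n m)) :
    ∃ T ∈ CompatConfigs (Rect (k : ℤ) (k : ℤ)),
      ∀ ij, T ∩ trS (toff n m ij) (Rect n m) = trS (toff n m ij) (f ij) := by
  set U : Set (ℤ × ℤ) := ⋃ ij, trS (toff n m ij) (f ij) with hU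
  have hUind : IsIndependent U := by
    rintro u hu v hv
    rw [hU, Set.mem_iUnion] at hu hv
    obtain ⟨ij, hu⟩ := hu
    obtain ⟨ij', hv⟩ := hv
    by_cases hij : ij = ij'
    · subst hij
      have := isIndependent_trS (t := toff n m ij) (hf ij).2.1
      exact this u hu v hv
    · have hne : (ij.1 : ℤ) ≠ (ij'.1 : ℤ) ∨ (ij.2 : ℤ) ≠ (ij'.2 : ℤ) := by
        by_contra hc
        push_neg at hc
        apply hij
        have h1 : ij.1 = ij'.1 := Fin.ext (by exact_mod_cast hc.1)
        have h2 : ij.2 = ij'.2 := Fin.ext (by exact_mod_cast hc.2)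
        exact Prod.ext h1 h2
      exact tiles_sep hn hm hne
        (Set.image_mono (hf ij).1 hu) (Set.image_mono (hf ij').1 hv)
  obtain ⟨S, hUS, hSind, hSdom⟩ := exists_isMIS_extension hUind
  have htile : ∀ ij, S ∩ trS (toff n m ij) (Rect n m) = trS (toff n m ij) (f ij) := by
    intro ij
    apply Set.Subset.antisymm
    · rintro u ⟨huS, hutile⟩
      by_contra hu
      obtain ⟨v, hv, hadj⟩ := (isMaxConfig_trS (hf ij)).2.2 u ⟨hutile, hu⟩
      have hvS : v ∈ S := hUS (Set.mem_iUnion.2 ⟨ij, hv⟩)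
      exact hSind u huS v hvS hadj
    · intro u hu
      exact ⟨hUS (Set.mem_iUnion.2 ⟨ij, hu⟩), Set.image_mono (hf ij).1 hu⟩
  refine ⟨S ∩ Rect (k : ℤ) (k : ℤ), ⟨S, ⟨hSind, hSdom⟩, rfl⟩, fun ij => ?_⟩
  rw [Set.inter_assoc, Set.inter_eq_self_of_subset_right (tile_sub_rect hn hm hp hq ij),
    htile]

lemma pow_le_cc (hn : 1 ≤ n) (hm : 1 ≤ m)
    (hp : (p : ℤ) * (n + 1) ≤ k) (hq : (q : ℤ) * (m + 1) ≤ k) :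
    ((MaxConfigs (Rect n m)).ncard) ^ (p * q) ≤ cc (k : ℤ) (k : ℤ) := by
  classical
  set D := MaxConfigs (Rect n m) with hD
  set X := CompatConfigs (Rect (k : ℤ) (k : ℤ)) with hX
  have hDfin : D.Finite := maxConfigs_finite (box_finite _ _ _ _)
  have hXfin : X.Finite := compatConfigs_finite (box_finite _ _ _ _)
  have hDsub := hDfin.to_subtype
  have hXsub := hXfin.to_subtype
  have key : ∀ g : Fin p × Fin q → ↥D, ∃ T : ↥X,
      ∀ ij, (T : Set (ℤ × ℤ)) ∩ trS (toff n m ij) (Rect n m) = trS (toff n m ij) (g ij) := by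
    intro g
    obtain ⟨T, hT, hT2⟩ := exists_compat_of_tiles hn hm hp hq
      (fun ij => (g ij : Set (ℤ × ℤ))) (fun ij => (g ij).2)
    exact ⟨⟨T, hT⟩, hT2⟩
  choose Φ hΦ using key
  have hΦinj : Function.Injective Φ := by
    intro g g' hgg
    funext ij
    have h1 := hΦ g ij
    have h2 := hΦ g' ij
    rw [hgg] at h1
    rw [h1] at h2
    exact Subtype.ext (trS_inj _ h2)
  have hcard := Nat.card_le_card_of_injective Φ hΦinj
  rw [Nat.card_fun] at hcard
  rw [Nat.card_coe_set_eq, Nat.card_coe_set_eq] at hcard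
  rw [Nat.card_eq_fintype_card, Fintype.card_prod, Fintype.card_fin, Fintype.card_fin] at hcard
  exact hcard

end LowerBound

/- ### analysis -/

open Filter

noncomputable def AA (j : ℕ) : ℝ := Real.logb 2 (cc j j)
noncomputable def uu (j : ℕ) : ℝ := AA j / (j : ℝ) ^ 2

lemma one_le_cc_real (n m : ℤ) : (1 : ℝ) ≤ (cc n m : ℝ) := by exact_mod_cast cc_pos n m

lemma AA_nonneg (j : ℕ) : 0 ≤ AA j := Real.logb_nonneg one_lt_two (one_le_cc_real _ _)

lemma uu_nonneg (j : ℕ) : 0 ≤ uu j := div_nonneg (AA_nonneg j) (by positivity)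

noncomputable def ES : Set ℝ := Set.range (fun n : ℕ => AA (n + 1) / ((n : ℝ) + 1) ^ 2)

noncomputable def LL : ℝ := sInf ES

lemma ES_nonempty : ES.Nonempty := ⟨_, 0, rfl⟩

lemma ES_bddBelow : BddBelow ES := by
  refine ⟨0, ?_⟩
  rintro x ⟨n0, rfl⟩
  exact div_nonneg (AA_nonneg _) (by positivity)

lemma LL_le_uu {j : ℕ} (hj : 1 ≤ j) : LL ≤ uu j := by
  apply csInf_le ES_bddBelow
  refine ⟨j - 1, ?_⟩
  have h1 : j - 1 + 1 = j := Nat.succ_pred_eq_of_pos hj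
  have h2 : ((j - 1 : ℕ) : ℝ) + 1 = (j : ℝ) := by
    rw [Nat.cast_sub hj]; push_cast; ring
  show AA (j - 1 + 1) / (((j - 1 : ℕ) : ℝ) + 1) ^ 2 = uu j
  rw [h1, h2]
  rfl

lemma cc_k_le (n j : ℕ) (hn : 1 ≤ n) :
    cc (j : ℤ) (j : ℤ) ≤ (cc (n : ℤ) (n : ℤ)) ^ ((j / n + 1) * (j / n + 1)) := by
  set q := j / n with hq
  have hmod := Nat.div_add_mod j n
  have hlt := Nat.mod_lt j (show 0 < n by omega)
  have hkq : j ≤ (q + 1) * n := by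
    have e : (q + 1) * n = n * q + n := by ring
    rw [e, ← hq] at *
    linarith [hmod, hlt]
  calc cc (j : ℤ) (j : ℤ) ≤ cc (((q+1) : ℕ) * (n : ℤ)) (((q+1) : ℕ) * (n : ℤ)) := by
        apply cc_mono <;> · push_cast; exact_mod_cast hkq
    _ ≤ (cc (n : ℤ) (n : ℤ)) ^ ((q+1) * (q+1)) := cc_sq_le (q+1) (by positivity)

lemma uu_le (n : ℕ) (hn : 1 ≤ n) (j : ℕ) (hj : 1 ≤ j) :
    uu j ≤ (1 / (n : ℝ) + 1 / (j : ℝ)) ^ 2 * AA n := by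
  set q := j / n with hq
  have h1 := cc_k_le n j hn
  have hA : AA j ≤ ((q + 1 : ℕ) : ℝ) ^ 2 * AA n := by
    have hle : ((cc (j:ℤ) (j:ℤ) : ℕ) : ℝ) ≤ ((cc (n:ℤ) (n:ℤ) : ℕ) : ℝ) ^ ((q+1)*(q+1)) := by
      exact_mod_cast h1
    have h2 : AA j ≤ Real.logb 2 (((cc (n:ℤ) (n:ℤ) : ℕ) : ℝ) ^ ((q+1)*(q+1))) := by
      apply (Real.logb_le_logb one_lt_two (by linarith [one_le_cc_real (j:ℤ) (j:ℤ)])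
        (pow_pos (by linarith [one_le_cc_real (n:ℤ) (n:ℤ)]) _)).2 hle
    rw [Real.logb_pow] at h2
    calc AA j ≤ (((q+1)*(q+1) : ℕ) : ℝ) * AA n := h2
      _ = ((q + 1 : ℕ) : ℝ) ^ 2 * AA n := by push_cast; ring
  have hqk : ((q + 1 : ℕ) : ℝ) / (j : ℝ) ≤ 1 / (n : ℝ) + 1 / (j : ℝ) := by
    have hcast : ((q : ℕ) : ℝ) ≤ (j : ℝ) / (n : ℝ) := Nat.cast_div_le
    have hj0 : (0:ℝ) < (j : ℝ) := by exact_mod_cast hj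
    have hn0 : (0:ℝ) < (n : ℝ) := by exact_mod_cast hn
    rw [div_le_iff₀ hj0]
    push_cast
    rw [add_mul]
    have e1 : 1 / (n:ℝ) * (j:ℝ) = (j:ℝ) / (n:ℝ) := by ring
    have e2 : 1 / (j:ℝ) * (j:ℝ) = 1 := by field_simp
    rw [e1, e2]
    linarith
  have hj2 : (0:ℝ) < (j : ℝ) ^ 2 := by
    have : (0:ℝ) < (j:ℝ) := by exact_mod_cast hj
    positivity
  have hq0 : (0:ℝ) ≤ ((q + 1 : ℕ) : ℝ) / (j : ℝ) := by positivity
  calc uu j = AA j / (j:ℝ)^2 := rfl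
    _ ≤ (((q + 1 : ℕ) : ℝ) ^ 2 * AA n) / (j:ℝ)^2 := by
        apply (div_le_div_iff_of_pos_right hj2).2 hA
    _ = (((q + 1 : ℕ) : ℝ) / (j:ℝ)) ^ 2 * AA n := by ring
    _ ≤ (1 / (n : ℝ) + 1 / (j : ℝ)) ^ 2 * AA n := by
        apply mul_le_mul_of_nonneg_right _ (AA_nonneg n)
        exact pow_le_pow_left₀ hq0 hqk 2

lemma tendsto_uu : Tendsto uu atTop (nhds LL) := by
  rw [Metric.tendsto_nhds]
  intro ε hε
  obtain ⟨x, ⟨n0, rfl⟩, hx⟩ := exists_lt_of_csInf_lt ES_nonempty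
    (lt_add_of_pos_right LL (half_pos hε))
  set n := n0 + 1 with hn
  have hv : Tendsto (fun j : ℕ => (1/(n:ℝ) + 1/(j:ℝ))^2 * AA n) atTop
      (nhds ((1/(n:ℝ) + 0)^2 * AA n)) := by
    exact (((tendsto_const_nhds.add tendsto_one_div_atTop_nhds_zero_nat).pow 2).mul_const _)
  have hval : (1/(n:ℝ) + 0)^2 * AA n = AA (n0+1) / ((n0:ℝ)+1)^2 := by
    have : ((n:ℕ) : ℝ) = (n0 : ℝ) + 1 := by rw [hn]; push_cast; ring
    rw [this]
    have hpos : (0:ℝ) < (n0:ℝ) + 1 := by positivity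
    field_simp
    simp [hn]
  have hlt : (1/(n:ℝ) + 0)^2 * AA n < LL + ε := by rw [hval]; linarith
  have hev := hv.eventually_lt_const hlt
  filter_upwards [hev, eventually_ge_atTop 1] with j h1 h2
  rw [Real.dist_eq, abs_lt]
  have hL := LL_le_uu h2
  have hu := uu_le n (by omega) j h2
  constructor
  · linarith
  · linarith

lemma lower_bound {n m : ℤ} (hn : 1 ≤ n) (hm : 1 ≤ m) :
    Real.logb 2 ((MaxConfigs (Rect n m)).ncard) / (((n:ℝ)+1) * ((m:ℝ)+1)) ≤ LL := by
  set b := Real.logb 2 (((MaxConfigs (Rect n m)).ncard : ℝ)) with hb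
  have hmm1 : 1 ≤ (MaxConfigs (Rect n m)).ncard := one_le_ncard_max (box_finite _ _ _ _)
  have hmmR : (1:ℝ) ≤ ((MaxConfigs (Rect n m)).ncard : ℝ) := by exact_mod_cast hmm1
  have hb0 : 0 ≤ b := Real.logb_nonneg one_lt_two hmmR
  set N : ℕ := (n+1).toNat with hN
  set M : ℕ := (m+1).toNat with hM
  have hNcast : ((N:ℕ) : ℤ) = n + 1 := Int.toNat_of_nonneg (by omega)
  have hMcast : ((M:ℕ) : ℤ) = m + 1 := Int.toNat_of_nonneg (by omega)
  have hNR : ((N:ℕ) : ℝ) = (n:ℝ) + 1 := by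
    exact_mod_cast congrArg (fun z : ℤ => (z : ℝ)) hNcast
  have hMR : ((M:ℕ) : ℝ) = (m:ℝ) + 1 := by
    exact_mod_cast congrArg (fun z : ℤ => (z : ℝ)) hMcast
  have hN0 : 0 < N := by omega
  have hM0 : 0 < M := by omega
  have hNR0 : (0:ℝ) < (N:ℝ) := by exact_mod_cast hN0
  have hMR0 : (0:ℝ) < (M:ℝ) := by exact_mod_cast hM0
  set w : ℕ → ℝ := fun j =>
    (max 0 ((j:ℝ)/(N:ℝ) - 1) * max 0 ((j:ℝ)/(M:ℝ) - 1)) / (j:ℝ)^2 * b with hw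
  have hwu : ∀ j, w j ≤ uu j := by
    intro j
    rcases Nat.eq_zero_or_pos j with rfl | hj
    · have : w 0 = 0 := by
        simp only [hw, Nat.cast_zero, zero_div, zero_sub]
        rw [max_eq_left (by norm_num)]
        ring
      rw [this]; exact uu_nonneg 0
    · set pk := j / N with hpk
      set qk := j / M with hqk
      have hple : (pk : ℤ) * (n+1) ≤ (j:ℤ) := by
        have h := Nat.div_mul_le_self j N
        calc (pk : ℤ) * (n+1) = ((pk * N : ℕ) : ℤ) := by push_cast [← hNcast]; ring
          _ ≤ (j : ℤ) := by exact_mod_cast h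
      have hqle : (qk : ℤ) * (m+1) ≤ (j:ℤ) := by
        have h := Nat.div_mul_le_self j M
        calc (qk : ℤ) * (m+1) = ((qk * M : ℕ) : ℤ) := by push_cast [← hMcast]; ring
          _ ≤ (j : ℤ) := by exact_mod_cast h
      have hkey := pow_le_cc hn hm hple hqle
      have hAk : ((pk:ℝ) * (qk:ℝ)) * b ≤ AA j := by
        have hcast : (((MaxConfigs (Rect n m)).ncard ^ (pk*qk) : ℕ) : ℝ) ≤
            ((cc (j:ℤ) (j:ℤ) : ℕ) : ℝ) := by exact_mod_cast hkey
        rw [Nat.cast_pow] at hcast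
        have h2 : Real.logb 2 (((MaxConfigs (Rect n m)).ncard : ℝ) ^ (pk*qk)) ≤ AA j :=
          (Real.logb_le_logb one_lt_two (by positivity)
            (by linarith [one_le_cc_real (j:ℤ) (j:ℤ)])).2 hcast
        rw [Real.logb_pow] at h2
        calc ((pk:ℝ) * (qk:ℝ)) * b = ((pk*qk : ℕ) : ℝ) * b := by push_cast; ring
          _ ≤ AA j := h2
      have hpkb : max 0 ((j:ℝ)/(N:ℝ) - 1) ≤ (pk:ℝ) := by
        apply max_le (by positivity)
        have hlt : (j:ℕ) < N * (pk + 1) := by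
          have h1 := Nat.div_add_mod j N
          have h2 := Nat.mod_lt j hN0
          rw [← hpk] at h1
          have e : N * (pk + 1) = N * pk + N := by ring
          rw [e]
          linarith [h1, h2]
        have hltR : (j:ℝ) < (N:ℝ) * ((pk:ℝ) + 1) := by exact_mod_cast hlt
        have : (j:ℝ)/(N:ℝ) < (pk:ℝ) + 1 := by
          rw [div_lt_iff₀ hNR0]; linarith
        linarith
      have hqkb : max 0 ((j:ℝ)/(M:ℝ) - 1) ≤ (qk:ℝ) := by
        apply max_le (by positivity)
        have hlt : (j:ℕ) < M * (qk + 1) := by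
          have h1 := Nat.div_add_mod j M
          have h2 := Nat.mod_lt j hM0
          rw [← hqk] at h1
          have e : M * (qk + 1) = M * qk + M := by ring
          rw [e]
          linarith [h1, h2]
        have hltR : (j:ℝ) < (M:ℝ) * ((qk:ℝ) + 1) := by exact_mod_cast hlt
        have : (j:ℝ)/(M:ℝ) < (qk:ℝ) + 1 := by
          rw [div_lt_iff₀ hMR0]; linarith
        linarith
      have hj2 : (0:ℝ) < (j:ℝ)^2 := by
        have : (0:ℝ) < (j:ℝ) := by exact_mod_cast hj
        positivity
      calc w j ≤ ((pk:ℝ) * (qk:ℝ)) / (j:ℝ)^2 * b := by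
            apply mul_le_mul_of_nonneg_right _ hb0
            apply (div_le_div_iff_of_pos_right hj2).2
            exact mul_le_mul hpkb hqkb (le_max_left _ _) (by positivity)
        _ = (((pk:ℝ) * (qk:ℝ)) * b) / (j:ℝ)^2 := by ring
        _ ≤ AA j / (j:ℝ)^2 := (div_le_div_iff_of_pos_right hj2).2 hAk
        _ = uu j := rfl
  have hwlim : Tendsto w atTop (nhds ((1/(N:ℝ) - 0) * (1/(M:ℝ) - 0) * b)) := by
    have hnice : Tendsto (fun j : ℕ => (1/(N:ℝ) - 1/(j:ℝ)) * (1/(M:ℝ) - 1/(j:ℝ)) * b) atTop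
        (nhds ((1/(N:ℝ) - 0) * (1/(M:ℝ) - 0) * b)) :=
      (((tendsto_const_nhds.sub tendsto_one_div_atTop_nhds_zero_nat).mul
        (tendsto_const_nhds.sub tendsto_one_div_atTop_nhds_zero_nat)).mul_const b)
    apply hnice.congr'
    filter_upwards [eventually_ge_atTop (max N M), eventually_ge_atTop 1] with j h1 h2
    have hjN : (N:ℝ) ≤ (j:ℝ) := by exact_mod_cast le_trans (le_max_left N M) h1
    have hjM : (M:ℝ) ≤ (j:ℝ) := by exact_mod_cast le_trans (le_max_right N M) h1
    have hjR : (0:ℝ) < (j:ℝ) := by exact_mod_cast h2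
    have e1 : max 0 ((j:ℝ)/(N:ℝ) - 1) = (j:ℝ)/(N:ℝ) - 1 := by
      apply max_eq_right
      rw [sub_nonneg, le_div_iff₀ hNR0]; linarith
    have e2 : max 0 ((j:ℝ)/(M:ℝ) - 1) = (j:ℝ)/(M:ℝ) - 1 := by
      apply max_eq_right
      rw [sub_nonneg, le_div_iff₀ hMR0]; linarith
    simp only [hw, e1, e2]
    have hj0 : (j:ℝ) ≠ 0 := ne_of_gt hjR
    have hN' : (N:ℝ) ≠ 0 := ne_of_gt hNR0
    have hM' : (M:ℝ) ≠ 0 := ne_of_gt hMR0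
    have hkey : ((j:ℝ)/(N:ℝ) - 1) * ((j:ℝ)/(M:ℝ) - 1) / (j:ℝ)^2
        = (1/(N:ℝ) - 1/(j:ℝ)) * (1/(M:ℝ) - 1/(j:ℝ)) := by
      have a1 : (j:ℝ)/(N:ℝ) - 1 = (j:ℝ) * (1/(N:ℝ) - 1/(j:ℝ)) := by
        rw [mul_sub, mul_one_div, mul_one_div, div_self hj0]
      have a2 : (j:ℝ)/(M:ℝ) - 1 = (j:ℝ) * (1/(M:ℝ) - 1/(j:ℝ)) := by
        rw [mul_sub, mul_one_div, mul_one_div, div_self hj0]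
      rw [a1, a2]
      have e3 : ((j:ℝ) * (1/(N:ℝ) - 1/(j:ℝ))) * ((j:ℝ) * (1/(M:ℝ) - 1/(j:ℝ)))
          = (1/(N:ℝ) - 1/(j:ℝ)) * (1/(M:ℝ) - 1/(j:ℝ)) * (j:ℝ)^2 := by ring
      rw [e3, mul_div_assoc, div_self (pow_ne_zero 2 hj0), mul_one]
    rw [hkey]
  have hfin := le_of_tendsto_of_tendsto' hwlim tendsto_uu hwu
  have heq : (1/(N:ℝ) - 0) * (1/(M:ℝ) - 0) * b
      = Real.logb 2 ((MaxConfigs (Rect n m)).ncard) / (((n:ℝ)+1) * ((m:ℝ)+1)) := by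
    rw [hNR, hMR, hb]
    have h1 : (0:ℝ) < (n:ℝ) + 1 := by rw [← hNR]; exact hNR0
    have h2 : (0:ℝ) < (m:ℝ) + 1 := by rw [← hMR]; exact hMR0
    field_simp
    ring
  rw [heq] at hfin
  exact hfin


/-- The topological entropy `H₀ = lim_k (log₂ |X_{Λ_k}|)/k²` of `X(𝔸)` exists,
and it dominates the block lower bounds `(log₂ |M_{Λ_{n,m}}|)/((n+1)(m+1))`. -/
theorem topological_entropy_exists :
    ∃ H₀ : ℝ,
      Filter.Tendsto
        (fun k : ℕ =>
          Real.logb 2 ((CompatConfigs (Rect (k : ℤ) (k : ℤ))).ncard) / (k : ℝ) ^ 2)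
        Filter.atTop (nhds H₀) ∧
      ∀ n m : ℤ, 1 ≤ n → 1 ≤ m →
        Real.logb 2 ((MaxConfigs (Rect n m)).ncard) / (((n : ℝ) + 1) * ((m : ℝ) + 1)) ≤ H₀ :=
  ⟨LL, tendsto_uu, fun _ _ hn hm => lower_bound hn hm⟩
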